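/- The energy-momentum map F = (H, J) : T*S² → ℝ² of the spherical pendulum is proper: the preimage of any compact subset of ℝ² is compact. -/
import Mathlib


/-- T*S² realized as a subset of ℝ³ × ℝ³. -/
def CotangentS2 : Set ((ℝ × ℝ × ℝ) × (ℝ × ℝ × ℝ)) :=
  {q | q.1.1^2 + q.1.2.1^2 + q.1.2.2^2 = 1 ∧
       q.1.1 * q.2.1 + q.1.2.1 * q.2.2.1 + q.1.2.2 * q.2.2.2 = 0}

/-- The energy-momentum map F = (H, J) of the spherical pendulum, where
H(x,p) = (1/2)|p|² + z and J(x,p) = x p_y − y pₓ. -/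
noncomputable def EM (q : (ℝ × ℝ × ℝ) × (ℝ × ℝ × ℝ)) : ℝ × ℝ :=
  ((1/2) * (q.2.1^2 + q.2.2.1^2 + q.2.2.2^2) + q.1.2.2,
   q.1.1 * q.2.2.1 - q.1.2.1 * q.2.1)

lemma EM_continuous : Continuous EM := by
  unfold EM; fun_prop

lemma CotangentS2_closed : IsClosed CotangentS2 := by
  have : CotangentS2 =
      {q : (ℝ × ℝ × ℝ) × (ℝ × ℝ × ℝ) | q.1.1^2 + q.1.2.1^2 + q.1.2.2^2 = 1} ∩
      {q | q.1.1 * q.2.1 + q.1.2.1 * q.2.2.1 + q.1.2.2 * q.2.2.2 = 0} := rfl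
  rw [this]
  exact (isClosed_eq (by fun_prop) continuous_const).inter
    (isClosed_eq (by fun_prop) continuous_const)

/-- The energy-momentum map of the spherical pendulum is proper: the preimage in
T*S² of any compact subset of ℝ² is compact. -/
theorem spherical_pendulum_EM_proper (K : Set (ℝ × ℝ)) (hK : IsCompact K) :
    IsCompact {q ∈ CotangentS2 | EM q ∈ K} := by
  have hset : {q ∈ CotangentS2 | EM q ∈ K} = CotangentS2 ∩ EM ⁻¹' K := rfl
  rw [hset]
  apply Metric.isCompact_of_isClosed_isBounded
  · exact CotangentS2_closed.inter (hK.isClosed.preimage EM_continuous)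
  · obtain ⟨C, hC⟩ := hK.isBounded.exists_norm_le
    set C' : ℝ := max C 0 with hC'
    have hC'0 : 0 ≤ C' := le_max_right _ _
    rw [isBounded_iff_forall_norm_le]
    refine ⟨max 1 (Real.sqrt (2 * C' + 2)), ?_⟩
    rintro ⟨⟨x, y, z⟩, ⟨p1, p2, p3⟩⟩ ⟨⟨hs, _⟩, hEM⟩
    simp only [Set.mem_setOf_eq] at hs
    have hKnorm := hC _ hEM
    have hH : |(1/2) * (p1^2 + p2^2 + p3^2) + z| ≤ C' := by
      rw [Prod.norm_def] at hKnorm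
      simp only [EM, Real.norm_eq_abs] at hKnorm
      exact le_trans (le_trans (le_max_left _ _) hKnorm) (le_max_left _ _)
    have hz : |z| ≤ 1 := by nlinarith [abs_nonneg z, sq_abs z]
    have hx : |x| ≤ 1 := by nlinarith [abs_nonneg x, sq_abs x, sq_nonneg y, sq_nonneg z]
    have hy : |y| ≤ 1 := by nlinarith [abs_nonneg y, sq_abs y, sq_nonneg x, sq_nonneg z]
    have hsum : p1^2 + p2^2 + p3^2 ≤ 2 * C' + 2 := by
      have h1 := abs_le.mp hH
      have h2 := abs_le.mp hz
      linarith [h1.2, h2.2]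
    have hp : ∀ p : ℝ, p^2 ≤ 2 * C' + 2 → |p| ≤ Real.sqrt (2 * C' + 2) := by
      intro p hp2
      rw [← Real.sqrt_sq_eq_abs]
      exact Real.sqrt_le_sqrt hp2
    have hp1 := hp p1 (by nlinarith [sq_nonneg p2, sq_nonneg p3])
    have hp2 := hp p2 (by nlinarith [sq_nonneg p1, sq_nonneg p3])
    have hp3 := hp p3 (by nlinarith [sq_nonneg p1, sq_nonneg p2])
    simp only [Prod.norm_def, Real.norm_eq_abs]
    apply max_le <;> [apply max_le; apply max_le] <;>
      first
        | exact le_max_of_le_left hx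
        | exact max_le (le_max_of_le_left hy) (le_max_of_le_left hz)
        | exact le_max_of_le_right hp1
        | exact max_le (le_max_of_le_right hp2) (le_max_of_le_right hp3)
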